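/- Fix an integer n > 2, α ∈ (0,1] and p ∈ [0,1]^n. In the crowdsourcing model, let â_i(t) = (1/(t(n−1)α²)) Σ_{s=1}^t Σ_{j≠i} 1{X_i(s) X_j(s) = 1}, and let a_i = (1/(n−1)) Σ_{j≠i} (p_i p_j + (1−p_i)(1−p_j)). Then for every t ≥ 1 and every ε > 0: P( max_{i=1,…,n} |â_i(t) − a_i| ≥ ε ) ≤ 2n · exp(−2 ε² α⁴ t). -/

import Mathlib

open MeasureTheory Finset
open scoped Classical

/-- Probability of `(G(t), X(t)) = (g, x)` for one task: `G(t)` is uniform on `{+1,−1}` and,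
given `G(t) = g`, the labels are independent with `X_i(t) = g` w.p. `α(1−p_i)`,
`X_i(t) = −g` w.p. `α p_i`, `X_i(t) = 0` w.p. `1−α`. -/
noncomputable def taskScore (n : ℕ) (α : ℝ) (p : Fin n → ℝ) (g : ℤ) (x : Fin n → ℤ) : ℝ :=
  (1 / 2 : ℝ) * ∏ i, (if x i = g then α * (1 - p i) else if x i = -g then α * p i else 1 - α)

/-- Empirical agreement rate `â_i(t)` of labeller `i` over tasks `1,…,t`. -/
noncomputable def ahat {Ω : Type*} (n : ℕ) (α : ℝ) (X : ℕ → Fin n → Ω → ℤ)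
    (t : ℕ) (i : Fin n) (ω : Ω) : ℝ :=
  (1 / ((t : ℝ) * ((n : ℝ) - 1) * α ^ 2)) * ∑ s ∈ Finset.Icc 1 t,
    ∑ j ∈ Finset.univ.erase i, (if X s i ω * X s j ω = 1 then (1 : ℝ) else 0)

section Aux
open Real

lemma hoeff_upos {q : ℝ} (hq0 : 0 ≤ q) (hq1 : q ≤ 1) (x : ℝ) :
    0 < 1 - q + q * Real.exp x := by
  rcases le_or_gt (Real.exp x) 1 with h | h
  · nlinarith [Real.exp_pos x, mul_nonneg (sub_nonneg.2 hq1) (sub_nonneg.2 h)]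
  · nlinarith [mul_nonneg hq0 (le_of_lt (lt_trans one_pos h))]

lemma hoeff_core {q : ℝ} (hq0 : 0 ≤ q) (hq1 : q ≤ 1) (h : ℝ) :
    1 - q + q * Real.exp h ≤ Real.exp (q * h + h ^ 2 / 8) := by
  set u : ℝ → ℝ := fun x => 1 - q + q * Real.exp x with hu
  have upos : ∀ x, 0 < u x := fun x => hoeff_upos hq0 hq1 x
  have hud : ∀ x, HasDerivAt u (q * Real.exp x) x := by
    intro x
    exact ((Real.hasDerivAt_exp x).const_mul q).const_add (1 - q)
  -- the function f and its derivative g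
  set f : ℝ → ℝ := fun x => q * x + x ^ 2 / 8 - Real.log (u x) with hf
  set g : ℝ → ℝ := fun x => q + x / 4 - q * Real.exp x / u x with hg
  have hfd : ∀ x, HasDerivAt f (g x) x := by
    intro x
    have h1 : HasDerivAt (fun x : ℝ => q * x + x ^ 2 / 8) (q + x / 4) x := by
      have := ((hasDerivAt_pow 2 x).div_const 8).const_add 0
      have h2 := ((hasDerivAt_id x).const_mul q).add ((hasDerivAt_pow 2 x).div_const 8)
      refine h2.congr_deriv ?_
      ring
    have h3 : HasDerivAt (fun x => Real.log (u x)) (q * Real.exp x / u x) x :=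
      (hud x).log (ne_of_gt (upos x))
    exact h1.sub h3
  have hgd : ∀ x, HasDerivAt g (1 / 4 - q * Real.exp x * (1 - q) / (u x) ^ 2) x := by
    intro x
    have h1 : HasDerivAt (fun x : ℝ => q + x / 4) (1 / 4) x := by
      simpa using ((hasDerivAt_id x).div_const 4).const_add q
    have h2 : HasDerivAt (fun x => q * Real.exp x / u x)
        ((q * Real.exp x * u x - q * Real.exp x * (q * Real.exp x)) / (u x) ^ 2) x :=
      ((Real.hasDerivAt_exp x).const_mul q).div (hud x) (ne_of_gt (upos x))
    have := h1.sub h2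
    refine this.congr_deriv ?_
    have hux : u x = 1 - q + q * Real.exp x := rfl
    rw [hux]
    ring
  have hgderiv_nonneg : ∀ x, 0 ≤ 1 / 4 - q * Real.exp x * (1 - q) / (u x) ^ 2 := by
    intro x
    have hux : 0 < u x := upos x
    rw [sub_nonneg, div_le_iff₀ (by positivity)]
    nlinarith [sq_nonneg ((1 - q) - q * Real.exp x), Real.exp_pos x]
  have hgmono : Monotone g := by
    apply monotone_of_deriv_nonneg
    · exact fun x => (hgd x).differentiableAt
    · intro x
      rw [(hgd x).deriv]
      exact hgderiv_nonneg x
  have hg0 : g 0 = 0 := by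
    have : u 0 = 1 := by simp [hu]
    simp [hg, this]
  have hf0 : f 0 = 0 := by
    have : u 0 = 1 := by simp [hu]
    simp [hf, this]
  have key : 0 ≤ f h := by
    rcases le_or_gt 0 h with hh | hh
    · have hmono : MonotoneOn f (Set.Ici 0) := by
        apply monotoneOn_of_deriv_nonneg (convex_Ici 0)
        · exact Continuous.continuousOn (by
            have : ∀ x, DifferentiableAt ℝ f x := fun x => (hfd x).differentiableAt
            exact (Differentiable.continuous (fun x => (this x) : Differentiable ℝ f)))
        · exact fun x _ => ((hfd x).differentiableAt).differentiableWithinAt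
        · intro x hx
          rw [(hfd x).deriv]
          rw [interior_Ici] at hx
          have := hgmono (le_of_lt hx)
          rw [hg0] at this
          exact this
      have := hmono Set.self_mem_Ici hh hh
      rwa [hf0] at this
    · have hanti : AntitoneOn f (Set.Iic 0) := by
        apply antitoneOn_of_deriv_nonpos (convex_Iic 0)
        · exact Continuous.continuousOn (by
            have : ∀ x, DifferentiableAt ℝ f x := fun x => (hfd x).differentiableAt
            exact (Differentiable.continuous (fun x => (this x) : Differentiable ℝ f)))
        · exact fun x _ => ((hfd x).differentiableAt).differentiableWithinAt
        · intro x hx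
          rw [(hfd x).deriv]
          rw [interior_Iic] at hx
          have := hgmono (le_of_lt hx)
          rw [hg0] at this
          exact this
      have := hanti (le_of_lt hh) Set.self_mem_Iic (le_of_lt hh)
      rwa [hf0] at this
  have hlog : Real.log (u h) ≤ q * h + h ^ 2 / 8 := by
    have : 0 ≤ q * h + h ^ 2 / 8 - Real.log (u h) := key
    linarith
  calc 1 - q + q * Real.exp h = u h := rfl
    _ = Real.exp (Real.log (u h)) := (Real.exp_log (upos h)).symm
    _ ≤ Real.exp (q * h + h ^ 2 / 8) := Real.exp_le_exp.2 hlog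

lemma hoeff_mgf {τ : Type*} (D : Finset τ) (w Z : τ → ℝ)
    (hw : ∀ d ∈ D, 0 ≤ w d) (hsum : ∑ d ∈ D, w d = 1)
    {c : ℝ} (hc : 0 < c) (hZ : ∀ d ∈ D, Z d ∈ Set.Icc 0 c) (l : ℝ) :
    ∑ d ∈ D, w d * Real.exp (l * Z d)
      ≤ Real.exp (l * (∑ d ∈ D, w d * Z d) + l ^ 2 * c ^ 2 / 8) := by
  set m : ℝ := ∑ d ∈ D, w d * Z d with hm
  have hm0 : 0 ≤ m := Finset.sum_nonneg fun d hd => mul_nonneg (hw d hd) (hZ d hd).1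
  have hmc : m ≤ c := by
    calc m ≤ ∑ d ∈ D, w d * c :=
          Finset.sum_le_sum fun d hd => mul_le_mul_of_nonneg_left (hZ d hd).2 (hw d hd)
      _ = c := by rw [← Finset.sum_mul, hsum, one_mul]
  -- convexity: exp (l * z) ≤ (1 - z/c) + (z/c) * exp (l*c) for z ∈ [0,c]
  have hconv : ∀ d ∈ D, Real.exp (l * Z d) ≤ (1 - Z d / c) + (Z d / c) * Real.exp (l * c) := by
    intro d hd
    have h0 : (0:ℝ) ≤ Z d / c := div_nonneg (hZ d hd).1 hc.le
    have h1 : Z d / c ≤ 1 := (div_le_one hc).2 (hZ d hd).2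
    have := convexOn_exp.2 (Set.mem_univ (0:ℝ)) (Set.mem_univ (l * c))
      (sub_nonneg.2 h1) h0 (by ring)
    simp only [smul_eq_mul, mul_zero, Real.exp_zero, mul_one, zero_add] at this
    have heq : (Z d / c) * (l * c) = l * Z d := by field_simp
    rw [heq] at this
    convert this using 1
  have step1 : ∑ d ∈ D, w d * Real.exp (l * Z d)
      ≤ (1 - m / c) + (m / c) * Real.exp (l * c) := by
    calc ∑ d ∈ D, w d * Real.exp (l * Z d)
        ≤ ∑ d ∈ D, w d * ((1 - Z d / c) + (Z d / c) * Real.exp (l * c)) :=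
          Finset.sum_le_sum fun d hd =>
            mul_le_mul_of_nonneg_left (hconv d hd) (hw d hd)
      _ = (∑ d ∈ D, w d) - (∑ d ∈ D, w d * Z d) / c
            + ((∑ d ∈ D, w d * Z d) / c) * Real.exp (l * c) := by
          rw [Finset.sum_div, Finset.sum_mul, ← Finset.sum_sub_distrib, ← Finset.sum_add_distrib]
          apply Finset.sum_congr rfl
          intro d hd
          field_simp
      _ = (1 - m / c) + (m / c) * Real.exp (l * c) := by rw [hsum, ← hm]
  have step2 : (1 - m / c) + (m / c) * Real.exp (l * c)
      ≤ Real.exp ((m / c) * (l * c) + (l * c) ^ 2 / 8) := by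
    have := hoeff_core (q := m / c) (div_nonneg hm0 hc.le) ((div_le_one hc).2 hmc) (l * c)
    linarith
  refine step1.trans (step2.trans (le_of_eq ?_))
  congr 1
  field_simp

lemma chernoff_upper {τ : Type*} [DecidableEq τ] {t : ℕ} (D : Finset τ) (w Z : τ → ℝ)
    (hw : ∀ d ∈ D, 0 ≤ w d) (hsum : ∑ d ∈ D, w d = 1)
    {c : ℝ} (hc : 0 < c) (hZ : ∀ d ∈ D, Z d ∈ Set.Icc 0 c) {β : ℝ} (hβ : 0 < β) :
    ∑ f ∈ (Fintype.piFinset (fun _ : Fin t => D)).filter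
        (fun f => (t : ℝ) * (∑ d ∈ D, w d * Z d) + t * β ≤ ∑ k, Z (f k)),
      ∏ k, w (f k) ≤ Real.exp (-2 * t * β ^ 2 / c ^ 2) := by
  set m : ℝ := ∑ d ∈ D, w d * Z d with hm
  set l : ℝ := 4 * β / c ^ 2 with hl
  have hl0 : 0 < l := by positivity
  set r : ℝ := (t : ℝ) * m + t * β with hr
  have hwf : ∀ f ∈ Fintype.piFinset (fun _ : Fin t => D), (0:ℝ) ≤ ∏ k, w (f k) := by
    intro f hf
    exact Finset.prod_nonneg fun k _ => hw (f k) (by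
      exact Fintype.mem_piFinset.1 hf k)
  have step1 : ∑ f ∈ (Fintype.piFinset (fun _ : Fin t => D)).filter
        (fun f => r ≤ ∑ k, Z (f k)), ∏ k, w (f k)
      ≤ ∑ f ∈ Fintype.piFinset (fun _ : Fin t => D),
          (∏ k, w (f k)) * Real.exp (l * ((∑ k, Z (f k)) - r)) := by
    calc ∑ f ∈ (Fintype.piFinset (fun _ : Fin t => D)).filter
            (fun f => r ≤ ∑ k, Z (f k)), ∏ k, w (f k)
        ≤ ∑ f ∈ (Fintype.piFinset (fun _ : Fin t => D)).filter
            (fun f => r ≤ ∑ k, Z (f k)),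
            (∏ k, w (f k)) * Real.exp (l * ((∑ k, Z (f k)) - r)) := by
          apply Finset.sum_le_sum
          intro f hf
          rcases Finset.mem_filter.1 hf with ⟨hf1, hf2⟩
          have h1 : (1:ℝ) ≤ Real.exp (l * ((∑ k, Z (f k)) - r)) := by
            rw [← Real.exp_zero]
            exact Real.exp_le_exp.2 (mul_nonneg hl0.le (by linarith))
          nlinarith [hwf f hf1]
      _ ≤ _ := by
          apply Finset.sum_le_sum_of_subset_of_nonneg (Finset.filter_subset _ _)
          intro f hf _
          exact mul_nonneg (hwf f hf) (Real.exp_pos _).le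
  have step2 : ∑ f ∈ Fintype.piFinset (fun _ : Fin t => D),
        (∏ k, w (f k)) * Real.exp (l * ((∑ k, Z (f k)) - r))
      = Real.exp (-(l * r)) * (∑ d ∈ D, w d * Real.exp (l * Z d)) ^ t := by
    have key : ∀ f : Fin t → τ, (∏ k, w (f k)) * Real.exp (l * ((∑ k, Z (f k)) - r))
        = Real.exp (-(l * r)) * ∏ k, (w (f k) * Real.exp (l * Z (f k))) := by
      intro f
      rw [Finset.prod_mul_distrib, ← Real.exp_sum, ← Finset.mul_sum,
        show l * ((∑ k, Z (f k)) - r) = -(l * r) + l * ∑ k, Z (f k) by ring, Real.exp_add]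
      ring
    rw [Finset.sum_congr rfl fun f _ => key f, ← Finset.mul_sum,
      Finset.sum_prod_piFinset D (fun (_ : Fin t) d => w d * Real.exp (l * Z d))]
    congr 1
    rw [Finset.prod_const, Finset.card_univ, Fintype.card_fin]
  have hmgf0 : 0 ≤ ∑ d ∈ D, w d * Real.exp (l * Z d) :=
    Finset.sum_nonneg fun d hd => mul_nonneg (hw d hd) (Real.exp_pos _).le
  have step3 : (∑ d ∈ D, w d * Real.exp (l * Z d)) ^ t
      ≤ Real.exp ((t : ℝ) * (l * m + l ^ 2 * c ^ 2 / 8)) := by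
    rw [Real.exp_nat_mul]
    exact pow_le_pow_left₀ hmgf0 (hoeff_mgf D w Z hw hsum hc hZ l) t
  have hfin : Real.exp (-(l * r)) * Real.exp ((t : ℝ) * (l * m + l ^ 2 * c ^ 2 / 8))
      = Real.exp (-2 * t * β ^ 2 / c ^ 2) := by
    rw [← Real.exp_add]
    congr 1
    rw [hr, hl]
    field_simp
    ring
  calc ∑ f ∈ (Fintype.piFinset (fun _ : Fin t => D)).filter
        (fun f => (t : ℝ) * m + t * β ≤ ∑ k, Z (f k)), ∏ k, w (f k)
      ≤ Real.exp (-(l * r)) * (∑ d ∈ D, w d * Real.exp (l * Z d)) ^ t := by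
        rw [← step2]; exact step1
    _ ≤ Real.exp (-(l * r)) * Real.exp ((t : ℝ) * (l * m + l ^ 2 * c ^ 2 / 8)) :=
        mul_le_mul_of_nonneg_left step3 (Real.exp_pos _).le
    _ = Real.exp (-2 * t * β ^ 2 / c ^ 2) := hfin


lemma phi_sum (α pk : ℝ) (g : ℤ) (hg : g = 1 ∨ g = -1) :
    ∑ a ∈ ({-1, 0, 1} : Finset ℤ),
      (if a = g then α * (1 - pk) else if a = -g then α * pk else 1 - α) = 1 := by
  rcases hg with rfl | rfl <;> norm_num [Finset.sum_insert, Finset.mem_insert] <;> ring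

lemma taskScore_nonneg {n : ℕ} {α : ℝ} {p : Fin n → ℝ} (hα : α ∈ Set.Ioc (0:ℝ) 1)
    (hp : ∀ i, p i ∈ Set.Icc (0:ℝ) 1) (g : ℤ) (x : Fin n → ℤ) :
    0 ≤ taskScore n α p g x := by
  unfold taskScore
  apply mul_nonneg (by norm_num)
  apply Finset.prod_nonneg
  intro i _
  rcases hα with ⟨hα0, hα1⟩
  rcases hp i with ⟨hp0, hp1⟩
  split
  · nlinarith
  · split
    · nlinarith
    · linarith

lemma taskScore_sum (n : ℕ) (α : ℝ) (p : Fin n → ℝ) :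
    ∑ d ∈ (({1, -1} : Finset ℤ) ×ˢ Fintype.piFinset (fun _ : Fin n => ({-1, 0, 1} : Finset ℤ))),
      taskScore n α p d.1 d.2 = 1 := by
  rw [Finset.sum_product]
  have key : ∀ g ∈ ({1, -1} : Finset ℤ),
      ∑ x ∈ Fintype.piFinset (fun _ : Fin n => ({-1, 0, 1} : Finset ℤ)),
        taskScore n α p g x = 1 / 2 := by
    intro g hg
    have hg' : g = 1 ∨ g = -1 := by simpa using hg
    unfold taskScore
    rw [← Finset.mul_sum,
      Finset.sum_prod_piFinset ({-1, 0, 1} : Finset ℤ)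
        (fun i a => if a = g then α * (1 - p i) else if a = -g then α * p i else 1 - α)]
    rw [Finset.prod_congr rfl fun i _ => phi_sum α (p i) g hg']
    simp
  rw [Finset.sum_congr rfl key]
  norm_num

lemma ind_mul_split (u v : ℤ) :
    (if u * v = 1 then (1:ℝ) else 0)
      = (if u = 1 then (1:ℝ) else 0) * (if v = 1 then (1:ℝ) else 0)
        + (if u = -1 then (1:ℝ) else 0) * (if v = -1 then (1:ℝ) else 0) := by
  simp only [Int.mul_eq_one_iff_eq_one_or_neg_one]
  by_cases h1 : u = 1 <;> by_cases h2 : v = 1 <;> by_cases h3 : u = -1 <;>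
    by_cases h4 : v = -1 <;> simp_all

lemma pi_two_factor {n : ℕ} (S : Finset ℤ) (φ : Fin n → ℤ → ℝ) (i j : Fin n)
    (hij : j ≠ i) (ψ1 ψ2 : ℤ → ℝ) :
    ∑ x ∈ Fintype.piFinset (fun _ : Fin n => S), (∏ k, φ k (x k)) * (ψ1 (x i) * ψ2 (x j))
      = ((∑ a ∈ S, φ i a * ψ1 a) * (∑ a ∈ S, φ j a * ψ2 a))
        * ∏ k ∈ (univ.erase i).erase j, (∑ a ∈ S, φ k a) := by
  set χ : Fin n → ℤ → ℝ :=
    fun k a => φ k a * (if k = i then ψ1 a else if k = j then ψ2 a else 1) with hχ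
  have hjmem : j ∈ univ.erase i := Finset.mem_erase.2 ⟨hij, Finset.mem_univ j⟩
  have h1 : ∀ x : Fin n → ℤ,
      (∏ k, φ k (x k)) * (ψ1 (x i) * ψ2 (x j)) = ∏ k, χ k (x k) := by
    intro x
    rw [hχ]
    rw [Finset.prod_mul_distrib]
    congr 1
    rw [← Finset.mul_prod_erase univ _ (Finset.mem_univ i),
      ← Finset.mul_prod_erase (univ.erase i) _ hjmem]
    have : ∀ k ∈ (univ.erase i).erase j,
        (if k = i then ψ1 (x k) else if k = j then ψ2 (x k) else 1) = 1 := by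
      intro k hk
      rcases Finset.mem_erase.1 hk with ⟨hk1, hk2⟩
      rcases Finset.mem_erase.1 hk2 with ⟨hk3, _⟩
      simp [hk1, hk3]
    rw [Finset.prod_congr rfl this, Finset.prod_const_one]
    simp [hij]
  rw [Finset.sum_congr rfl fun x _ => h1 x, Finset.sum_prod_piFinset S χ]
  rw [← Finset.mul_prod_erase univ _ (Finset.mem_univ i),
    ← Finset.mul_prod_erase (univ.erase i) _ hjmem]
  have e1 : ∑ a ∈ S, χ i a = ∑ a ∈ S, φ i a * ψ1 a := by
    apply Finset.sum_congr rfl; intro a _; simp [hχ]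
  have e2 : ∑ a ∈ S, χ j a = ∑ a ∈ S, φ j a * ψ2 a := by
    apply Finset.sum_congr rfl; intro a _; simp [hχ, hij]
  have e3 : ∀ k ∈ (univ.erase i).erase j, ∑ a ∈ S, χ k a = ∑ a ∈ S, φ k a := by
    intro k hk
    rcases Finset.mem_erase.1 hk with ⟨hk1, hk2⟩
    rcases Finset.mem_erase.1 hk2 with ⟨hk3, _⟩
    apply Finset.sum_congr rfl; intro a _; simp [hχ, hk1, hk3]
  rw [e1, e2, Finset.prod_congr rfl e3]
  ring

lemma pair_mean (n : ℕ) (α : ℝ) (p : Fin n → ℝ) (i j : Fin n) (hji : j ≠ i) :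
    ∑ d ∈ (({1, -1} : Finset ℤ) ×ˢ Fintype.piFinset (fun _ : Fin n => ({-1, 0, 1} : Finset ℤ))),
      taskScore n α p d.1 d.2 * (if d.2 i * d.2 j = 1 then (1:ℝ) else 0)
      = α ^ 2 * (p i * p j + (1 - p i) * (1 - p j)) := by
  set S3 : Finset ℤ := {-1, 0, 1} with hS3
  set ψp : ℤ → ℝ := fun a => if a = 1 then (1:ℝ) else 0 with hψp
  set ψm : ℤ → ℝ := fun a => if a = -1 then (1:ℝ) else 0 with hψm
  rw [Finset.sum_product]
  have main : ∀ g : ℤ, g = 1 ∨ g = -1 →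
      ∑ x ∈ Fintype.piFinset (fun _ : Fin n => S3),
        taskScore n α p g x * (if x i * x j = 1 then (1:ℝ) else 0)
      = 1/2 * ((∑ a ∈ S3, (if a = g then α * (1 - p i) else if a = -g then α * p i else 1 - α) * ψp a)
              * (∑ a ∈ S3, (if a = g then α * (1 - p j) else if a = -g then α * p j else 1 - α) * ψp a)
            + (∑ a ∈ S3, (if a = g then α * (1 - p i) else if a = -g then α * p i else 1 - α) * ψm a)
              * (∑ a ∈ S3, (if a = g then α * (1 - p j) else if a = -g then α * p j else 1 - α) * ψm a)) := by
    intro g hg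
    set φ : Fin n → ℤ → ℝ :=
      fun k a => if a = g then α * (1 - p k) else if a = -g then α * p k else 1 - α with hφ
    have hstep : ∀ x : Fin n → ℤ,
        taskScore n α p g x * (if x i * x j = 1 then (1:ℝ) else 0)
        = 1/2 * ((∏ k, φ k (x k)) * (ψp (x i) * ψp (x j))
               + (∏ k, φ k (x k)) * (ψm (x i) * ψm (x j))) := by
      intro x
      unfold taskScore
      rw [ind_mul_split (x i) (x j)]
      rw [hψp, hψm, hφ]
      ring
    rw [Finset.sum_congr rfl fun x _ => hstep x, ← Finset.mul_sum, Finset.sum_add_distrib]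
    rw [pi_two_factor S3 φ i j hji ψp ψp, pi_two_factor S3 φ i j hji ψm ψm]
    have hrest : ∏ k ∈ (univ.erase i).erase j, (∑ a ∈ S3, φ k a) = 1 := by
      rw [Finset.prod_congr rfl fun k _ => phi_sum α (p k) g hg]
      exact Finset.prod_const_one
    rw [hrest, mul_one, mul_one]
  have e1 : ∀ k, (∑ a ∈ S3, (if a = (1:ℤ) then α * (1 - p k) else if a = -1 then α * p k else 1 - α) * ψp a)
      = α * (1 - p k) := by
    intro k; rw [hS3, hψp]; norm_num
  have e2 : ∀ k, (∑ a ∈ S3, (if a = (1:ℤ) then α * (1 - p k) else if a = -1 then α * p k else 1 - α) * ψm a)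
      = α * p k := by
    intro k; rw [hS3, hψm]; norm_num
  have e3 : ∀ k, (∑ a ∈ S3, (if a = (-1:ℤ) then α * (1 - p k) else if a = -(-1) then α * p k else 1 - α) * ψp a)
      = α * p k := by
    intro k; rw [hS3, hψp]; norm_num
  have e4 : ∀ k, (∑ a ∈ S3, (if a = (-1:ℤ) then α * (1 - p k) else if a = -(-1) then α * p k else 1 - α) * ψm a)
      = α * (1 - p k) := by
    intro k; rw [hS3, hψm]; norm_num
  rw [Finset.sum_insert (by norm_num), Finset.sum_singleton]
  rw [main 1 (Or.inl rfl), main (-1) (Or.inr rfl)]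
  rw [e1 i, e1 j, e2 i, e2 j, e3 i, e3 j, e4 i, e4 j]
  ring


lemma sum_Icc_one_fin (t : ℕ) (h : ℕ → ℝ) :
    ∑ s ∈ Finset.Icc 1 t, h s = ∑ k : Fin t, h ((k : ℕ) + 1) := by
  refine Finset.sum_bij' (fun (s : ℕ) (hs : s ∈ Finset.Icc 1 t) =>
      (⟨s - 1, by rcases Finset.mem_Icc.1 hs with ⟨h1, h2⟩; omega⟩ : Fin t))
    (fun (k : Fin t) _ => (k : ℕ) + 1) ?_ ?_ ?_ ?_ ?_
  · intro s hs
    exact Finset.mem_univ _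
  · intro k _
    simp [Finset.mem_Icc, Nat.succ_le_of_lt k.isLt]
  · intro s hs
    rcases Finset.mem_Icc.1 hs with ⟨h1, h2⟩
    dsimp only
    omega
  · intro k _
    exact Fin.ext (by simp)
  · intro s hs
    rcases Finset.mem_Icc.1 hs with ⟨h1, h2⟩
    dsimp only
    congr 1
    omega

lemma prod_Icc_one_fin (t : ℕ) (h : ℕ → ℝ) :
    ∏ s ∈ Finset.Icc 1 t, h s = ∏ k : Fin t, h ((k : ℕ) + 1) := by
  refine Finset.prod_bij' (fun (s : ℕ) (hs : s ∈ Finset.Icc 1 t) =>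
      (⟨s - 1, by rcases Finset.mem_Icc.1 hs with ⟨h1, h2⟩; omega⟩ : Fin t))
    (fun (k : Fin t) _ => (k : ℕ) + 1) ?_ ?_ ?_ ?_ ?_
  · intro s hs
    exact Finset.mem_univ _
  · intro k _
    simp [Finset.mem_Icc, Nat.succ_le_of_lt k.isLt]
  · intro s hs
    rcases Finset.mem_Icc.1 hs with ⟨h1, h2⟩
    dsimp only
    omega
  · intro k _
    exact Fin.ext (by simp)
  · intro s hs
    rcases Finset.mem_Icc.1 hs with ⟨h1, h2⟩
    dsimp only
    congr 1
    omega


end Aux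

set_option maxHeartbeats 2000000 in
/-- concentration of the empirical agreement rates:
`P( max_i |â_i(t) − a_i| ≥ ε ) ≤ 2n exp(−2ε²α⁴t)`. -/
theorem agreement_rate_concentration
    {Ω : Type*} [MeasurableSpace Ω] (μ : Measure Ω) [IsProbabilityMeasure μ]
    (n : ℕ) (hn : 2 < n) (α : ℝ) (hα : α ∈ Set.Ioc (0 : ℝ) 1)
    (p : Fin n → ℝ) (hp : ∀ i, p i ∈ Set.Icc (0 : ℝ) 1)
    (G : ℕ → Ω → ℤ) (X : ℕ → Fin n → Ω → ℤ)
    (hGmeas : ∀ s, Measurable (G s)) (hXmeas : ∀ s i, Measurable (X s i))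
    (hGval : ∀ s ω, G s ω = 1 ∨ G s ω = -1)
    (hXval : ∀ s i ω, X s i ω = -1 ∨ X s i ω = 0 ∨ X s i ω = 1)
    -- tasks are i.i.d. with the crowdsourcing per-task law:
    (hlaw : ∀ (T : ℕ) (g : ℕ → ℤ) (x : ℕ → Fin n → ℤ),
      (∀ s, g s = 1 ∨ g s = -1) → (∀ s i, x s i = -1 ∨ x s i = 0 ∨ x s i = 1) →
      μ {ω | ∀ s ∈ Finset.Icc 1 T, (G s ω = g s ∧ ∀ i, X s i ω = x s i)} =
        ENNReal.ofReal (∏ s ∈ Finset.Icc 1 T, taskScore n α p (g s) (x s)))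
    -- true agreement rates:
    (a : Fin n → ℝ)
    (ha : ∀ i, a i = (1 / ((n : ℝ) - 1)) * ∑ j ∈ Finset.univ.erase i,
      (p i * p j + (1 - p i) * (1 - p j)))
    (t : ℕ) (ht : 1 ≤ t) (ε : ℝ) (hε : 0 < ε) :
    μ {ω | ∃ i, ε ≤ |ahat n α X t i ω - a i|}
      ≤ ENNReal.ofReal (2 * (n : ℝ) * Real.exp (-2 * ε ^ 2 * α ^ 4 * (t : ℝ))) := by
  classical
  obtain ⟨hα0, hα1⟩ := hα
  have hn3 : (3:ℝ) ≤ (n:ℝ) := by exact_mod_cast hn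
  have hc : (0:ℝ) < (n:ℝ) - 1 := by linarith
  have ht0 : (0:ℝ) < (t:ℝ) := by exact_mod_cast Nat.lt_of_lt_of_le Nat.zero_lt_one ht
  have hβ : (0:ℝ) < ((n:ℝ) - 1) * α ^ 2 * ε := by positivity
  have hK : (0:ℝ) < (t : ℝ) * ((n : ℝ) - 1) * α ^ 2 := by positivity
  -- per-task data
  set D : Finset (ℤ × (Fin n → ℤ)) :=
    (({1, -1} : Finset ℤ) ×ˢ Fintype.piFinset (fun _ : Fin n => ({-1, 0, 1} : Finset ℤ)))
    with hDdef
  have hw : ∀ d ∈ D, 0 ≤ taskScore n α p d.1 d.2 :=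
    fun d _ => taskScore_nonneg ⟨hα0, hα1⟩ hp d.1 d.2
  have hsum : ∑ d ∈ D, taskScore n α p d.1 d.2 = 1 := taskScore_sum n α p
  have hZnonneg : ∀ (i : Fin n) (d : ℤ × (Fin n → ℤ)),
      (0:ℝ) ≤ ∑ j ∈ univ.erase i, (if d.2 i * d.2 j = 1 then (1:ℝ) else 0) := by
    intro i d
    apply Finset.sum_nonneg
    intro j _
    split <;> norm_num
  have hZrange : ∀ (i : Fin n), ∀ d ∈ D,
      (∑ j ∈ univ.erase i, if d.2 i * d.2 j = 1 then (1:ℝ) else 0)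
        ∈ Set.Icc (0:ℝ) ((n:ℝ) - 1) := by
    intro i d _
    refine ⟨hZnonneg i d, ?_⟩
    calc (∑ j ∈ univ.erase i, if d.2 i * d.2 j = 1 then (1:ℝ) else 0)
        ≤ ∑ j ∈ univ.erase i, (1:ℝ) := by
          apply Finset.sum_le_sum
          intro j _
          split <;> norm_num
      _ = ((n:ℝ) - 1) := by
          rw [Finset.sum_const, Finset.card_erase_of_mem (Finset.mem_univ i)]
          rw [Finset.card_univ, Fintype.card_fin]
          rw [nsmul_eq_mul, mul_one]
          rw [Nat.cast_sub (by omega)]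
          norm_num
  have hmean : ∀ i : Fin n,
      ∑ d ∈ D, taskScore n α p d.1 d.2 *
        (∑ j ∈ univ.erase i, if d.2 i * d.2 j = 1 then (1:ℝ) else 0)
      = ((n:ℝ) - 1) * α ^ 2 * a i := by
    intro i
    have swap : ∑ d ∈ D, taskScore n α p d.1 d.2 *
        (∑ j ∈ univ.erase i, if d.2 i * d.2 j = 1 then (1:ℝ) else 0)
        = ∑ j ∈ univ.erase i, ∑ d ∈ D,
            taskScore n α p d.1 d.2 * (if d.2 i * d.2 j = 1 then (1:ℝ) else 0) := by
      simp_rw [Finset.mul_sum]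
      rw [Finset.sum_comm]
    rw [swap]
    have : ∀ j ∈ univ.erase i, ∑ d ∈ D,
        taskScore n α p d.1 d.2 * (if d.2 i * d.2 j = 1 then (1:ℝ) else 0)
        = α ^ 2 * (p i * p j + (1 - p i) * (1 - p j)) := by
      intro j hj
      exact pair_mean n α p i j (Finset.mem_erase.1 hj).1
    rw [Finset.sum_congr rfl this, ← Finset.mul_sum, ha i]
    field_simp
  -- atoms
  set A : (Fin t → ℤ × (Fin n → ℤ)) → Set Ω := fun cf =>
    {ω | ∀ k : Fin t, G ((k : ℕ) + 1) ω = (cf k).1 ∧ ∀ i, X ((k : ℕ) + 1) i ω = (cf k).2 i}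
    with hAdef
  have hatom : ∀ cf ∈ Fintype.piFinset (fun _ : Fin t => D),
      μ (A cf) = ENNReal.ofReal (∏ k, taskScore n α p (cf k).1 (cf k).2) := by
    intro cf hcf
    have hmem : ∀ k, cf k ∈ D := fun k => Fintype.mem_piFinset.1 hcf k
    have hmem1 : ∀ k, (cf k).1 = 1 ∨ (cf k).1 = -1 := by
      intro k
      have := (Finset.mem_product.1 (hmem k)).1
      simpa using this
    have hmem2 : ∀ k i, (cf k).2 i = -1 ∨ (cf k).2 i = 0 ∨ (cf k).2 i = 1 := by
      intro k i
      have := Fintype.mem_piFinset.1 (Finset.mem_product.1 (hmem k)).2 i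
      simpa using this
    set gg : ℕ → ℤ := fun s =>
      if hs : s - 1 < t ∧ 1 ≤ s then (cf ⟨s - 1, hs.1⟩).1 else 1 with hggdef
    set xx : ℕ → Fin n → ℤ := fun s i =>
      if hs : s - 1 < t ∧ 1 ≤ s then (cf ⟨s - 1, hs.1⟩).2 i else 0 with hxxdef
    have hcond : ∀ k : Fin t, (k : ℕ) + 1 - 1 < t ∧ 1 ≤ (k : ℕ) + 1 :=
      fun k => ⟨by simpa using k.isLt, by omega⟩
    have hfin : ∀ k : Fin t, (⟨(k : ℕ) + 1 - 1, (hcond k).1⟩ : Fin t) = k :=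
      fun k => Fin.ext (by simp)
    have hgg : ∀ k : Fin t, gg ((k : ℕ) + 1) = (cf k).1 := by
      intro k
      rw [hggdef]
      dsimp only
      rw [dif_pos (hcond k), hfin k]
    have hxx : ∀ (k : Fin t) (i : Fin n), xx ((k : ℕ) + 1) i = (cf k).2 i := by
      intro k i
      rw [hxxdef]
      dsimp only
      rw [dif_pos (hcond k), hfin k]
    have hg' : ∀ s, gg s = 1 ∨ gg s = -1 := by
      intro s
      rw [hggdef]
      dsimp only
      split
      · exact hmem1 _
      · exact Or.inl rfl
    have hx' : ∀ s i, xx s i = -1 ∨ xx s i = 0 ∨ xx s i = 1 := by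
      intro s i
      rw [hxxdef]
      dsimp only
      split
      · exact hmem2 _ _
      · exact Or.inr (Or.inl rfl)
    have hset : {ω | ∀ s ∈ Finset.Icc 1 t, (G s ω = gg s ∧ ∀ i, X s i ω = xx s i)} = A cf := by
      ext ω
      rw [hAdef]
      simp only [Set.mem_setOf_eq]
      constructor
      · intro H k
        have hk : (k : ℕ) + 1 ∈ Finset.Icc 1 t := by
          rw [Finset.mem_Icc]
          exact ⟨by omega, k.isLt⟩
        obtain ⟨h1, h2⟩ := H _ hk
        exact ⟨by rw [h1, hgg k], fun i => by rw [h2 i, hxx k i]⟩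
      · intro H s hs
        rcases Finset.mem_Icc.1 hs with ⟨hs1, hs2⟩
        have hsk : s = ((⟨s - 1, by omega⟩ : Fin t) : ℕ) + 1 := by
          simp only []
          omega
        obtain ⟨h1, h2⟩ := H (⟨s - 1, by omega⟩ : Fin t)
        rw [hsk]
        exact ⟨by rw [h1, hgg], fun i => by rw [h2 i, hxx]⟩
    rw [← hset, hlaw t gg xx hg' hx']
    congr 1
    rw [prod_Icc_one_fin t (fun s => taskScore n α p (gg s) (xx s))]
    apply Finset.prod_congr rfl
    intro k _
    have hxf : xx ((k : ℕ) + 1) = (cf k).2 := funext (hxx k)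
    rw [hgg k, hxf]
  -- the event as a union of atoms
  set F : Finset (Fin t → ℤ × (Fin n → ℤ)) :=
    (Fintype.piFinset (fun _ : Fin t => D)).filter
      (fun cf => ∃ i, ε ≤ |(1 / ((t : ℝ) * ((n : ℝ) - 1) * α ^ 2)) *
        (∑ k, ∑ j ∈ univ.erase i, if (cf k).2 i * (cf k).2 j = 1 then (1:ℝ) else 0) - a i|)
    with hFdef
  have hsub : {ω | ∃ i, ε ≤ |ahat n α X t i ω - a i|} ⊆ ⋃ cf ∈ F, A cf := by
    intro ω hω
    set cf0 : Fin t → ℤ × (Fin n → ℤ) :=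
      fun k => (G ((k : ℕ) + 1) ω, fun i => X ((k : ℕ) + 1) i ω) with hcf0
    have hmem : cf0 ∈ Fintype.piFinset (fun _ : Fin t => D) := by
      rw [Fintype.mem_piFinset]
      intro k
      rw [hDdef, Finset.mem_product]
      constructor
      · simpa using hGval ((k : ℕ) + 1) ω
      · rw [Fintype.mem_piFinset]
        intro i
        simpa using hXval ((k : ℕ) + 1) i ω
    have hahat : ∀ i, ahat n α X t i ω
        = (1 / ((t : ℝ) * ((n : ℝ) - 1) * α ^ 2)) *
          (∑ k, ∑ j ∈ univ.erase i, if (cf0 k).2 i * (cf0 k).2 j = 1 then (1:ℝ) else 0) := by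
      intro i
      unfold ahat
      congr 1
      exact sum_Icc_one_fin t (fun s =>
        ∑ j ∈ univ.erase i, if X s i ω * X s j ω = 1 then (1:ℝ) else 0)
    have hmemF : cf0 ∈ F := by
      rw [hFdef, Finset.mem_filter]
      refine ⟨hmem, ?_⟩
      obtain ⟨i, hi⟩ := hω
      exact ⟨i, by rwa [hahat i] at hi⟩
    have hωA : ω ∈ A cf0 := by
      rw [hAdef]
      exact fun k => ⟨rfl, fun i => rfl⟩
    exact Set.mem_biUnion hmemF hωA
  -- reduction to a real inequality
  have hWnonneg : ∀ cf ∈ Fintype.piFinset (fun _ : Fin t => D),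
      (0:ℝ) ≤ ∏ k, taskScore n α p (cf k).1 (cf k).2 :=
    fun cf hcf => Finset.prod_nonneg fun k _ =>
      taskScore_nonneg ⟨hα0, hα1⟩ hp (cf k).1 (cf k).2
  have hreal : ∑ cf ∈ F, ∏ k, taskScore n α p (cf k).1 (cf k).2
      ≤ 2 * (n : ℝ) * Real.exp (-2 * ε ^ 2 * α ^ 4 * (t : ℝ)) := by
    have himp : ∀ cf : Fin t → ℤ × (Fin n → ℤ),
        (∃ i, ε ≤ |(1 / ((t : ℝ) * ((n : ℝ) - 1) * α ^ 2)) *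
          (∑ k, ∑ j ∈ univ.erase i, if (cf k).2 i * (cf k).2 j = 1 then (1:ℝ) else 0) - a i|) →
        ∃ i,
          ((t : ℝ) * (∑ d ∈ D, taskScore n α p d.1 d.2 *
              (∑ j ∈ univ.erase i, if d.2 i * d.2 j = 1 then (1:ℝ) else 0))
            + t * (((n:ℝ) - 1) * α ^ 2 * ε)
            ≤ ∑ k, ∑ j ∈ univ.erase i, if (cf k).2 i * (cf k).2 j = 1 then (1:ℝ) else 0)
          ∨
          ((t : ℝ) * (∑ d ∈ D, taskScore n α p d.1 d.2 *
              (((n:ℝ) - 1) - ∑ j ∈ univ.erase i, if d.2 i * d.2 j = 1 then (1:ℝ) else 0))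
            + t * (((n:ℝ) - 1) * α ^ 2 * ε)
            ≤ ∑ k, (((n:ℝ) - 1)
                - ∑ j ∈ univ.erase i, if (cf k).2 i * (cf k).2 j = 1 then (1:ℝ) else 0)) := by
      rintro cf ⟨i, hi⟩
      refine ⟨i, ?_⟩
      have hm' : ∑ d ∈ D, taskScore n α p d.1 d.2 *
          (((n:ℝ) - 1) - ∑ j ∈ univ.erase i, if d.2 i * d.2 j = 1 then (1:ℝ) else 0)
          = ((n:ℝ) - 1) - ∑ d ∈ D, taskScore n α p d.1 d.2 *
              (∑ j ∈ univ.erase i, if d.2 i * d.2 j = 1 then (1:ℝ) else 0) := by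
        rw [Finset.sum_congr rfl (fun d _ => mul_sub (taskScore n α p d.1 d.2) ((n:ℝ) - 1)
          (∑ j ∈ univ.erase i, if d.2 i * d.2 j = 1 then (1:ℝ) else 0))]
        rw [Finset.sum_sub_distrib, ← Finset.sum_mul, hsum, one_mul]
      have hS' : ∑ k : Fin t, (((n:ℝ) - 1)
            - ∑ j ∈ univ.erase i, if (cf k).2 i * (cf k).2 j = 1 then (1:ℝ) else 0)
          = (t:ℝ) * ((n:ℝ) - 1)
            - ∑ k, ∑ j ∈ univ.erase i, if (cf k).2 i * (cf k).2 j = 1 then (1:ℝ) else 0 := by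
        rw [Finset.sum_sub_distrib, Finset.sum_const, Finset.card_univ, Fintype.card_fin,
          nsmul_eq_mul]
      have hKa : ((t:ℝ) * ((n:ℝ) - 1) * α ^ 2) * a i
          = (t:ℝ) * (∑ d ∈ D, taskScore n α p d.1 d.2 *
              (∑ j ∈ univ.erase i, if d.2 i * d.2 j = 1 then (1:ℝ) else 0)) := by
        rw [hmean i]
        ring
      have hinv : ((t:ℝ) * ((n:ℝ) - 1) * α ^ 2) * ((1 / ((t : ℝ) * ((n : ℝ) - 1) * α ^ 2)) *
          (∑ k, ∑ j ∈ univ.erase i, if (cf k).2 i * (cf k).2 j = 1 then (1:ℝ) else 0))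
          = ∑ k, ∑ j ∈ univ.erase i, if (cf k).2 i * (cf k).2 j = 1 then (1:ℝ) else 0 := by
        field_simp
      rcases le_abs.1 hi with h | h
      · left
        nlinarith [mul_le_mul_of_nonneg_left h hK.le, hinv, hKa]
      · right
        rw [hm', hS']
        nlinarith [mul_le_mul_of_nonneg_left h hK.le, hinv, hKa]
    -- union bound over labellers and tails
    have key : ∀ cf ∈ Fintype.piFinset (fun _ : Fin t => D),
        (if (∃ i, ε ≤ |(1 / ((t : ℝ) * ((n : ℝ) - 1) * α ^ 2)) *
            (∑ k, ∑ j ∈ univ.erase i, if (cf k).2 i * (cf k).2 j = 1 then (1:ℝ) else 0) - a i|)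
          then ∏ k, taskScore n α p (cf k).1 (cf k).2 else 0)
        ≤ ∑ i : Fin n,
          ((if (t : ℝ) * (∑ d ∈ D, taskScore n α p d.1 d.2 *
              (∑ j ∈ univ.erase i, if d.2 i * d.2 j = 1 then (1:ℝ) else 0))
              + t * (((n:ℝ) - 1) * α ^ 2 * ε)
              ≤ ∑ k, ∑ j ∈ univ.erase i, if (cf k).2 i * (cf k).2 j = 1 then (1:ℝ) else 0
            then ∏ k, taskScore n α p (cf k).1 (cf k).2 else 0)
          + (if (t : ℝ) * (∑ d ∈ D, taskScore n α p d.1 d.2 *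
              (((n:ℝ) - 1) - ∑ j ∈ univ.erase i, if d.2 i * d.2 j = 1 then (1:ℝ) else 0))
              + t * (((n:ℝ) - 1) * α ^ 2 * ε)
              ≤ ∑ k, (((n:ℝ) - 1)
                - ∑ j ∈ univ.erase i, if (cf k).2 i * (cf k).2 j = 1 then (1:ℝ) else 0)
            then ∏ k, taskScore n α p (cf k).1 (cf k).2 else 0)) := by
      intro cf hcf
      have hWcf := hWnonneg cf hcf
      have hterm : ∀ i : Fin n, (0:ℝ) ≤
          (if (t : ℝ) * (∑ d ∈ D, taskScore n α p d.1 d.2 *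
              (∑ j ∈ univ.erase i, if d.2 i * d.2 j = 1 then (1:ℝ) else 0))
              + t * (((n:ℝ) - 1) * α ^ 2 * ε)
              ≤ ∑ k, ∑ j ∈ univ.erase i, if (cf k).2 i * (cf k).2 j = 1 then (1:ℝ) else 0
            then ∏ k, taskScore n α p (cf k).1 (cf k).2 else 0)
          + (if (t : ℝ) * (∑ d ∈ D, taskScore n α p d.1 d.2 *
              (((n:ℝ) - 1) - ∑ j ∈ univ.erase i, if d.2 i * d.2 j = 1 then (1:ℝ) else 0))
              + t * (((n:ℝ) - 1) * α ^ 2 * ε)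
              ≤ ∑ k, (((n:ℝ) - 1)
                - ∑ j ∈ univ.erase i, if (cf k).2 i * (cf k).2 j = 1 then (1:ℝ) else 0)
            then ∏ k, taskScore n α p (cf k).1 (cf k).2 else 0) := by
        intro i
        apply add_nonneg <;> split <;> simp [hWcf]
      split
      case isTrue hq =>
        obtain ⟨i, hi⟩ := himp cf hq
        refine le_trans ?_ (Finset.single_le_sum (fun i _ => hterm i) (Finset.mem_univ i))
        rcases hi with h | h
        · rw [if_pos h]
          have : (0:ℝ) ≤ (if (t : ℝ) * (∑ d ∈ D, taskScore n α p d.1 d.2 *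
              (((n:ℝ) - 1) - ∑ j ∈ univ.erase i, if d.2 i * d.2 j = 1 then (1:ℝ) else 0))
              + t * (((n:ℝ) - 1) * α ^ 2 * ε)
              ≤ ∑ k, (((n:ℝ) - 1)
                - ∑ j ∈ univ.erase i, if (cf k).2 i * (cf k).2 j = 1 then (1:ℝ) else 0)
            then ∏ k, taskScore n α p (cf k).1 (cf k).2 else 0) := by
            split <;> simp [hWcf]
          linarith
        · rw [if_pos h]
          have : (0:ℝ) ≤ (if (t : ℝ) * (∑ d ∈ D, taskScore n α p d.1 d.2 *
              (∑ j ∈ univ.erase i, if d.2 i * d.2 j = 1 then (1:ℝ) else 0))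
              + t * (((n:ℝ) - 1) * α ^ 2 * ε)
              ≤ ∑ k, ∑ j ∈ univ.erase i, if (cf k).2 i * (cf k).2 j = 1 then (1:ℝ) else 0
            then ∏ k, taskScore n α p (cf k).1 (cf k).2 else 0) := by
            split <;> simp [hWcf]
          linarith
      case isFalse hq =>
        exact Finset.sum_nonneg fun i _ => hterm i
    have step1 : ∑ cf ∈ F, ∏ k, taskScore n α p (cf k).1 (cf k).2
        ≤ ∑ i : Fin n,
          ((∑ cf ∈ (Fintype.piFinset (fun _ : Fin t => D)).filter
              (fun cf => (t : ℝ) * (∑ d ∈ D, taskScore n α p d.1 d.2 *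
                (∑ j ∈ univ.erase i, if d.2 i * d.2 j = 1 then (1:ℝ) else 0))
                + t * (((n:ℝ) - 1) * α ^ 2 * ε)
                ≤ ∑ k, ∑ j ∈ univ.erase i, if (cf k).2 i * (cf k).2 j = 1 then (1:ℝ) else 0),
              ∏ k, taskScore n α p (cf k).1 (cf k).2)
          + (∑ cf ∈ (Fintype.piFinset (fun _ : Fin t => D)).filter
              (fun cf => (t : ℝ) * (∑ d ∈ D, taskScore n α p d.1 d.2 *
                (((n:ℝ) - 1) - ∑ j ∈ univ.erase i, if d.2 i * d.2 j = 1 then (1:ℝ) else 0))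
                + t * (((n:ℝ) - 1) * α ^ 2 * ε)
                ≤ ∑ k, (((n:ℝ) - 1)
                  - ∑ j ∈ univ.erase i, if (cf k).2 i * (cf k).2 j = 1 then (1:ℝ) else 0)),
              ∏ k, taskScore n α p (cf k).1 (cf k).2)) := by
      rw [hFdef, Finset.sum_filter]
      refine le_trans (Finset.sum_le_sum key) ?_
      rw [Finset.sum_comm]
      apply le_of_eq
      apply Finset.sum_congr rfl
      intro i _
      rw [Finset.sum_add_distrib, Finset.sum_filter, Finset.sum_filter]
    have hchp : ∀ i : Fin n,
        ∑ cf ∈ (Fintype.piFinset (fun _ : Fin t => D)).filter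
            (fun cf => (t : ℝ) * (∑ d ∈ D, taskScore n α p d.1 d.2 *
              (∑ j ∈ univ.erase i, if d.2 i * d.2 j = 1 then (1:ℝ) else 0))
              + t * (((n:ℝ) - 1) * α ^ 2 * ε)
              ≤ ∑ k, ∑ j ∈ univ.erase i, if (cf k).2 i * (cf k).2 j = 1 then (1:ℝ) else 0),
            ∏ k, taskScore n α p (cf k).1 (cf k).2
          ≤ Real.exp (-2 * t * (((n:ℝ) - 1) * α ^ 2 * ε) ^ 2 / ((n:ℝ) - 1) ^ 2) := by
      intro i
      exact chernoff_upper D (fun d => taskScore n α p d.1 d.2)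
        (fun d => ∑ j ∈ univ.erase i, if d.2 i * d.2 j = 1 then (1:ℝ) else 0)
        hw hsum hc (hZrange i) hβ
    have hchm : ∀ i : Fin n,
        ∑ cf ∈ (Fintype.piFinset (fun _ : Fin t => D)).filter
            (fun cf => (t : ℝ) * (∑ d ∈ D, taskScore n α p d.1 d.2 *
              (((n:ℝ) - 1) - ∑ j ∈ univ.erase i, if d.2 i * d.2 j = 1 then (1:ℝ) else 0))
              + t * (((n:ℝ) - 1) * α ^ 2 * ε)
              ≤ ∑ k, (((n:ℝ) - 1)
                - ∑ j ∈ univ.erase i, if (cf k).2 i * (cf k).2 j = 1 then (1:ℝ) else 0)),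
            ∏ k, taskScore n α p (cf k).1 (cf k).2
          ≤ Real.exp (-2 * t * (((n:ℝ) - 1) * α ^ 2 * ε) ^ 2 / ((n:ℝ) - 1) ^ 2) := by
      intro i
      refine chernoff_upper D (fun d => taskScore n α p d.1 d.2)
        (fun d => ((n:ℝ) - 1) - ∑ j ∈ univ.erase i, if d.2 i * d.2 j = 1 then (1:ℝ) else 0)
        hw hsum hc ?_ hβ
      intro d hd
      obtain ⟨h1, h2⟩ := hZrange i d hd
      refine Set.mem_Icc.2 ⟨?_, ?_⟩ <;> linarith
    have hexp : Real.exp (-2 * t * (((n:ℝ) - 1) * α ^ 2 * ε) ^ 2 / ((n:ℝ) - 1) ^ 2)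
        = Real.exp (-2 * ε ^ 2 * α ^ 4 * (t : ℝ)) := by
      congr 1
      field_simp
    calc ∑ cf ∈ F, ∏ k, taskScore n α p (cf k).1 (cf k).2
        ≤ ∑ i : Fin n,
          ((∑ cf ∈ (Fintype.piFinset (fun _ : Fin t => D)).filter
              (fun cf => (t : ℝ) * (∑ d ∈ D, taskScore n α p d.1 d.2 *
                (∑ j ∈ univ.erase i, if d.2 i * d.2 j = 1 then (1:ℝ) else 0))
                + t * (((n:ℝ) - 1) * α ^ 2 * ε)
                ≤ ∑ k, ∑ j ∈ univ.erase i, if (cf k).2 i * (cf k).2 j = 1 then (1:ℝ) else 0),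
              ∏ k, taskScore n α p (cf k).1 (cf k).2)
          + (∑ cf ∈ (Fintype.piFinset (fun _ : Fin t => D)).filter
              (fun cf => (t : ℝ) * (∑ d ∈ D, taskScore n α p d.1 d.2 *
                (((n:ℝ) - 1) - ∑ j ∈ univ.erase i, if d.2 i * d.2 j = 1 then (1:ℝ) else 0))
                + t * (((n:ℝ) - 1) * α ^ 2 * ε)
                ≤ ∑ k, (((n:ℝ) - 1)
                  - ∑ j ∈ univ.erase i, if (cf k).2 i * (cf k).2 j = 1 then (1:ℝ) else 0)),
              ∏ k, taskScore n α p (cf k).1 (cf k).2)) := step1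
      _ ≤ ∑ _i : Fin n, (Real.exp (-2 * ε ^ 2 * α ^ 4 * (t : ℝ))
            + Real.exp (-2 * ε ^ 2 * α ^ 4 * (t : ℝ))) := by
          apply Finset.sum_le_sum
          intro i _
          have := add_le_add (hchp i) (hchm i)
          rwa [hexp] at this
      _ = 2 * (n : ℝ) * Real.exp (-2 * ε ^ 2 * α ^ 4 * (t : ℝ)) := by
          rw [Finset.sum_const, Finset.card_univ, Fintype.card_fin, nsmul_eq_mul]
          ring
  calc μ {ω | ∃ i, ε ≤ |ahat n α X t i ω - a i|}
      ≤ μ (⋃ cf ∈ F, A cf) := measure_mono hsub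
    _ ≤ ∑ cf ∈ F, μ (A cf) := measure_biUnion_finset_le F A
    _ = ∑ cf ∈ F, ENNReal.ofReal (∏ k, taskScore n α p (cf k).1 (cf k).2) :=
        Finset.sum_congr rfl fun cf hcf => hatom cf (Finset.mem_filter.1 (hFdef ▸ hcf)).1
    _ = ENNReal.ofReal (∑ cf ∈ F, ∏ k, taskScore n α p (cf k).1 (cf k).2) :=
        (ENNReal.ofReal_sum_of_nonneg fun cf hcf =>
          hWnonneg cf (Finset.mem_filter.1 (hFdef ▸ hcf)).1).symm
    _ ≤ ENNReal.ofReal (2 * (n : ℝ) * Real.exp (-2 * ε ^ 2 * α ^ 4 * (t : ℝ))) :=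
        ENNReal.ofReal_le_ofReal hreal
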